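/- The clause C = P(x,y) ∨ P(y,x) is not blocked by P(x,y) in F = { ¬P(u,v) ∨ ¬P(v,u) }: although both binary resolvents of C upon P(x,y) with the clause of F are valid, the P(x,y)-resolvent obtained by unifying P(x,y) simultaneously with P(u,v) and P(v,u) via the mgu {y ↦ x, u ↦ x, v ↦ x} is the clause P(x,x), which is not valid; moreover F is satisfiable while F ∪ {C} is unsatisfiable. -/
import Mathlib


/-- First-order terms over variables `V` and function symbols `Fn`. -/
inductive Term (V Fn : Type) : Type
  | var : V → Term V Fn
  | app : Fn → List (Term V Fn) → Term V Fn

/-- A substitution maps variables to terms. -/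
abbrev Subst (V Fn : Type) := V → Term V Fn

/-- Applying a substitution to a term. -/
def Term.subst {V Fn : Type} (σ : Subst V Fn) : Term V Fn → Term V Fn
  | .var v => σ v
  | .app f ts => .app f (ts.attach.map (fun t => Term.subst σ t.1))
  decreasing_by have := List.sizeOf_lt_of_mem t.2; simp at *; omega

/-- The set of variables occurring in a term. -/
def Term.vars {V Fn : Type} : Term V Fn → Set V
  | .var v => {v}
  | .app _ ts => {x | ∃ t ∈ ts.attach, x ∈ Term.vars t.1}
  decreasing_by have := List.sizeOf_lt_of_mem t.2; simp at *; omega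

/-- A term is ground if it contains no variables. -/
def Term.IsGround {V Fn : Type} (t : Term V Fn) : Prop := t.vars = ∅

/-- Composition of substitutions: `σ.comp γ` is "first σ, then γ". -/
def Subst.comp {V Fn : Type} (σ γ : Subst V Fn) : Subst V Fn :=
  fun v => (σ v).subst γ

/-- An atom: a predicate symbol applied to a list of argument terms. -/
structure Atom (V Fn P : Type) where
  pred : P
  args : List (Term V Fn)

/-- A literal: an atom with a polarity (`true` = positive). -/
structure Lit (V Fn P : Type) where
  pol : Bool
  atom : Atom V Fn P

/-- The complement of a literal. -/
def Lit.compl {V Fn P : Type} (l : Lit V Fn P) : Lit V Fn P := ⟨!l.pol, l.atom⟩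

def Atom.subst {V Fn P : Type} (σ : Subst V Fn) (A : Atom V Fn P) : Atom V Fn P :=
  ⟨A.pred, A.args.map (Term.subst σ)⟩

def Lit.subst {V Fn P : Type} (σ : Subst V Fn) (l : Lit V Fn P) : Lit V Fn P :=
  ⟨l.pol, l.atom.subst σ⟩

/-- A clause is a multiset (disjunction) of literals. -/
abbrev Clause (V Fn P : Type) := Multiset (Lit V Fn P)

def Clause.subst {V Fn P : Type} (σ : Subst V Fn) (C : Clause V Fn P) : Clause V Fn P :=
  C.map (Lit.subst σ)

def Atom.vars {V Fn P : Type} (A : Atom V Fn P) : Set V := {x | ∃ t ∈ A.args, x ∈ t.vars}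
def Lit.vars {V Fn P : Type} (l : Lit V Fn P) : Set V := l.atom.vars
def Clause.vars {V Fn P : Type} (C : Clause V Fn P) : Set V := {x | ∃ l ∈ C, x ∈ l.vars}

/-- A clause is ground if it contains no variables. -/
def Clause.IsGround {V Fn P : Type} (C : Clause V Fn P) : Prop := C.vars = ∅

/-- A substitution `σ` unifies a list of literals if it maps them all to the same literal. -/
def IsUnifier {V Fn P : Type} (σ : Subst V Fn) (ls : List (Lit V Fn P)) : Prop :=
  ∀ l₁ ∈ ls, ∀ l₂ ∈ ls, l₁.subst σ = l₂.subst σ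

/-- A most general unifier: every unifier factors through it. -/
def IsMGU {V Fn P : Type} (σ : Subst V Fn) (ls : List (Lit V Fn P)) : Prop :=
  IsUnifier σ ls ∧ ∀ τ, IsUnifier τ ls → ∃ γ, σ.comp γ = τ

/-- Validity of an equality-free clause: it contains a complementary pair of literals. -/
def Clause.ValidEF {V Fn P : Type} (C : Clause V Fn P) : Prop :=
  ∃ A : Atom V Fn P, (⟨true, A⟩ : Lit V Fn P) ∈ C ∧ (⟨false, A⟩ : Lit V Fn P) ∈ C

/-- `C` (written as `L ∨ C'`) is blocked by `L` in `F`: all `L`-resolvents with clauses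
of `F \ {L ∨ C'}` are valid. -/
def BlockedEF {V Fn P : Type} (L : Lit V Fn P) (C' : Clause V Fn P)
    (F : Set (Clause V Fn P)) : Prop :=
  ∀ D ∈ F, D ≠ L ::ₘ C' → ∀ Ns Drest : Clause V Fn P, Ns + Drest = D → Ns ≠ 0 →
    ∀ σ : Subst V Fn, IsMGU σ (L :: (Ns.map Lit.compl).toList) →
      Clause.ValidEF (C'.subst σ + Drest.subst σ)

/-- A propositional assignment on (ground) atoms. -/
abbrev PAssign (V Fn P : Type) := Atom V Fn P → Bool

def litTrue {V Fn P : Type} (α : PAssign V Fn P) (l : Lit V Fn P) : Prop :=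
  α l.atom = l.pol

/-- Propositional satisfaction of a (ground) clause. -/
def satC {V Fn P : Type} (α : PAssign V Fn P) (C : Clause V Fn P) : Prop :=
  ∃ l ∈ C, litTrue α l

/-- A first-order interpretation. -/
structure Interp (Fn P : Type) : Type 1 where
  dom : Type
  nonempty : Nonempty dom
  fn : Fn → List dom → dom
  pr : P → List dom → Prop

def Term.eval {V Fn P : Type} (I : Interp Fn P) (ρ : V → I.dom) : Term V Fn → I.dom
  | .var v => ρ v
  | .app f ts => I.fn f (ts.attach.map (fun t => Term.eval I ρ t.1))
  decreasing_by have := List.sizeOf_lt_of_mem t.2; simp at *; omega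

def litHolds {V Fn P : Type} (I : Interp Fn P) (ρ : V → I.dom) (l : Lit V Fn P) : Prop :=
  l.pol = true ↔ I.pr l.atom.pred (l.atom.args.map (Term.eval I ρ))

def clauseHolds {V Fn P : Type} (I : Interp Fn P) (ρ : V → I.dom) (C : Clause V Fn P) : Prop :=
  ∃ l ∈ C, litHolds I ρ l

/-- First-order satisfiability of a CNF formula (clauses implicitly universally quantified). -/
def SatEF {V Fn P : Type} (F : Set (Clause V Fn P)) : Prop :=
  ∃ I : Interp Fn P, ∀ C ∈ F, ∀ ρ : V → I.dom, clauseHolds I ρ C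


/-- The literal `(¬)P(s,t)` over a single binary predicate, variables `ℕ` (x = 0, y = 1,
u = 2, v = 3) and a single constant `c`. -/
def pL (pol : Bool) (s t : Term ℕ Unit) : Lit ℕ Unit Unit := ⟨pol, ⟨(), [s, t]⟩⟩

def vx : Term ℕ Unit := Term.var 0
def vy : Term ℕ Unit := Term.var 1
def vu : Term ℕ Unit := Term.var 2
def vv : Term ℕ Unit := Term.var 3


section Aux

@[simp] lemma Term.subst_var {V Fn : Type} (σ : Subst V Fn) (n : V) :
    Term.subst σ (.var n) = σ n := by simp [Term.subst]

@[simp] lemma Lit.subst_pL (σ : Subst ℕ Unit) (p : Bool) (s t : Term ℕ Unit) :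
    Lit.subst σ (pL p s t) = pL p (s.subst σ) (t.subst σ) := by
  simp [Lit.subst, Atom.subst, pL]

@[simp] lemma Lit.compl_pL (p : Bool) (s t : Term ℕ Unit) :
    (pL p s t).compl = pL (!p) s t := rfl

lemma pL_inj {p q : Bool} {s t s' t' : Term ℕ Unit} :
    pL p s t = pL q s' t' ↔ p = q ∧ s = s' ∧ t = t' := by
  constructor
  · intro h; simpa [pL, Lit.mk.injEq, Atom.mk.injEq] using h
  · rintro ⟨rfl, rfl, rfl⟩; rfl

lemma IsMGU_of_mem_iff {V Fn P : Type} {σ : Subst V Fn} {ls ls' : List (Lit V Fn P)}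
    (h : ∀ l, l ∈ ls ↔ l ∈ ls') (hm : IsMGU σ ls) : IsMGU σ ls' := by
  obtain ⟨hu, hf⟩ := hm
  refine ⟨fun a ha b hb => hu a ((h a).2 ha) b ((h b).2 hb), fun τ hτ => ?_⟩
  exact hf τ (fun a ha b hb => hτ a ((h a).1 ha) b ((h b).1 hb))

@[simp] lemma Term.eval_var {V Fn P : Type} (I : Interp Fn P) (ρ : V → I.dom) (n : V) :
    Term.eval I ρ (.var n) = ρ n := by simp [Term.eval]

end Aux

/-- `C = P(x,y) ∨ P(y,x)` is not blocked by `L = P(x,y)` in `F = {¬P(u,v) ∨ ¬P(v,u)}`: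
both binary `L`-resolvents are valid, but the `L`-resolvent via the mgu
`{y ↦ x, u ↦ x, v ↦ x}` is `P(x,x)`, which is not valid; moreover `F` is satisfiable while
`F ∪ {C}` is unsatisfiable. -/
theorem stmt19 :
    let L : Lit ℕ Unit Unit := pL true vx vy
    let C' : Clause ℕ Unit Unit := {pL true vy vx}
    let D : Clause ℕ Unit Unit := {pL false vu vv, pL false vv vu}
    let F : Set (Clause ℕ Unit Unit) := {D}
    let σ₁ : Subst ℕ Unit := fun n => if n = 0 then vu else if n = 1 then vv else Term.var n
    let σ₂ : Subst ℕ Unit := fun n => if n = 0 then vv else if n = 1 then vu else Term.var n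
    let σ₃ : Subst ℕ Unit := fun n => if n ≤ 3 then vx else Term.var n
    -- both binary resolvents are valid
    (IsMGU σ₁ [L, (pL false vu vv).compl] ∧
      Clause.ValidEF (C'.subst σ₁ + Clause.subst σ₁ {pL false vv vu})) ∧
    (IsMGU σ₂ [L, (pL false vv vu).compl] ∧
      Clause.ValidEF (C'.subst σ₂ + Clause.subst σ₂ {pL false vu vv})) ∧
    -- the simultaneous L-resolvent P(x,x) is not valid
    (IsMGU σ₃ [L, (pL false vu vv).compl, (pL false vv vu).compl] ∧
      ¬ Clause.ValidEF (C'.subst σ₃)) ∧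
    -- hence C is not blocked by L in F
    ¬ BlockedEF L C' F ∧
    -- F is satisfiable while F ∪ {C} is unsatisfiable
    SatEF F ∧ ¬ SatEF (F ∪ {(L ::ₘ C' : Clause ℕ Unit Unit)}) := by
  
  intro L C' D F σ₁ σ₂ σ₃
  have hvx : vx = Term.var 0 := rfl
  have hvy : vy = Term.var 1 := rfl
  have hvu : vu = Term.var 2 := rfl
  have hvv : vv = Term.var 3 := rfl
  -- key substitution computations
  have e1L : Lit.subst σ₁ L = pL true vu vv := by simp [L, σ₁, vx, vy]
  have e1N : Lit.subst σ₁ (pL false vu vv).compl = pL true vu vv := by simp [σ₁, vu, vv]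
  have e1a : Lit.subst σ₁ (pL true vy vx) = pL true vv vu := by simp [σ₁, vx, vy]
  have e1b : Lit.subst σ₁ (pL false vv vu) = pL false vv vu := by simp [σ₁, vu, vv]
  have e2L : Lit.subst σ₂ L = pL true vv vu := by simp [L, σ₂, vx, vy]
  have e2N : Lit.subst σ₂ (pL false vv vu).compl = pL true vv vu := by simp [σ₂, vu, vv]
  have e2a : Lit.subst σ₂ (pL true vy vx) = pL true vu vv := by simp [σ₂, vx, vy]
  have e2b : Lit.subst σ₂ (pL false vu vv) = pL false vu vv := by simp [σ₂, vu, vv]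
  have e3L : Lit.subst σ₃ L = pL true vx vx := by simp [L, σ₃, vx, vy]
  have e3M : Lit.subst σ₃ (pL false vu vv).compl = pL true vx vx := by simp [σ₃, vu, vv]
  have e3N : Lit.subst σ₃ (pL false vv vu).compl = pL true vx vx := by simp [σ₃, vu, vv]
  have e3a : Lit.subst σ₃ (pL true vy vx) = pL true vx vx := by simp [σ₃, vx, vy]
  have mgu3 : IsMGU σ₃ [L, (pL false vu vv).compl, (pL false vv vu).compl] := by
    constructor
    · intro a ha b hb
      simp only [List.mem_cons, List.not_mem_nil, or_false] at ha hb
      rcases ha with rfl | rfl | rfl <;> rcases hb with rfl | rfl | rfl <;>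
        simp only [e3L, e3M, e3N]
    · intro τ hτ
      have h1 := hτ L (by simp) (pL false vu vv).compl (by simp)
      have h2 := hτ L (by simp) (pL false vv vu).compl (by simp)
      simp only [L, Lit.compl_pL] at h1 h2
      rw [Lit.subst_pL, Lit.subst_pL, pL_inj] at h1 h2
      obtain ⟨-, a1, a2⟩ := h1
      obtain ⟨-, b1, b2⟩ := h2
      simp only [hvx, hvy, hvu, hvv, Term.subst_var] at a1 a2 b1 b2
      refine ⟨τ, funext fun n => ?_⟩
      simp only [Subst.comp, σ₃]
      split
      · next h =>
        interval_cases n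
        · simp [hvx]
        · simp only [hvx, Term.subst_var]
          rw [a1, ← b2]
        · simp only [hvx, Term.subst_var]
          exact a1
        · simp only [hvx, Term.subst_var]
          exact b1
      · simp
  have nv3 : ¬ Clause.ValidEF (C'.subst σ₃) := by
    rintro ⟨A, h1, h2⟩
    simp only [C', Clause.subst, Multiset.map_singleton, e3a] at h1 h2
    rw [Multiset.mem_singleton] at h2
    exact Bool.false_ne_true (congrArg Lit.pol h2)
  refine ⟨⟨?_, ?_⟩, ⟨?_, ?_⟩, ⟨mgu3, nv3⟩, ?_, ?_, ?_⟩
  · -- σ₁ MGU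
    constructor
    · intro a ha b hb
      simp only [List.mem_cons, List.not_mem_nil, or_false] at ha hb
      rcases ha with rfl | rfl <;> rcases hb with rfl | rfl <;> simp only [e1L, e1N]
    · intro τ hτ
      have h := hτ L (by simp) (pL false vu vv).compl (by simp)
      simp only [L, Lit.compl_pL] at h
      rw [Lit.subst_pL, Lit.subst_pL, pL_inj] at h
      obtain ⟨-, h1, h2⟩ := h
      refine ⟨τ, funext fun n => ?_⟩
      simp only [Subst.comp, σ₁]
      split
      · next h => subst h; simpa [hvx, hvu] using h1.symm
      · split
        · next h => subst h; simpa [hvy, hvv] using h2.symm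
        · simp
  · -- resolvent 1 valid
    refine ⟨⟨(), [vv, vu]⟩, ?_, ?_⟩
    · rw [Multiset.mem_add]; left
      show pL true vv vu ∈ Clause.subst σ₁ {pL true vy vx}
      rw [Clause.subst, Multiset.map_singleton, Multiset.mem_singleton, e1a]
    · rw [Multiset.mem_add]; right
      show pL false vv vu ∈ Clause.subst σ₁ {pL false vv vu}
      rw [Clause.subst, Multiset.map_singleton, Multiset.mem_singleton, e1b]
  · -- σ₂ MGU
    constructor
    · intro a ha b hb
      simp only [List.mem_cons, List.not_mem_nil, or_false] at ha hb
      rcases ha with rfl | rfl <;> rcases hb with rfl | rfl <;> simp only [e2L, e2N]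
    · intro τ hτ
      have h := hτ L (by simp) (pL false vv vu).compl (by simp)
      simp only [L, Lit.compl_pL] at h
      rw [Lit.subst_pL, Lit.subst_pL, pL_inj] at h
      obtain ⟨-, h1, h2⟩ := h
      refine ⟨τ, funext fun n => ?_⟩
      simp only [Subst.comp, σ₂]
      split
      · next h => subst h; simpa [hvx, hvv] using h1.symm
      · split
        · next h => subst h; simpa [hvy, hvu] using h2.symm
        · simp
  · -- resolvent 2 valid
    refine ⟨⟨(), [vu, vv]⟩, ?_, ?_⟩
    · rw [Multiset.mem_add]; left
      show pL true vu vv ∈ Clause.subst σ₂ {pL true vy vx}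
      rw [Clause.subst, Multiset.map_singleton, Multiset.mem_singleton, e2a]
    · rw [Multiset.mem_add]; right
      show pL false vu vv ∈ Clause.subst σ₂ {pL false vu vv}
      rw [Clause.subst, Multiset.map_singleton, Multiset.mem_singleton, e2b]
  · -- not blocked
    intro hb
    have hDne : D ≠ L ::ₘ C' := by
      intro h
      have hm : (pL false vu vv : Lit ℕ Unit Unit) ∈ D := by simp [D]
      rw [h] at hm
      simp only [L, C', Multiset.mem_cons, Multiset.mem_singleton] at hm
      rcases hm with h' | h' <;> exact Bool.false_ne_true (congrArg Lit.pol h')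
    have hmgu : IsMGU σ₃ (L :: (D.map Lit.compl).toList) := by
      refine IsMGU_of_mem_iff (fun l => ?_) mgu3
      have hperm : List.Perm (D.map Lit.compl).toList
          [(pL false vu vv).compl, (pL false vv vu).compl] := by
        rw [← Multiset.coe_eq_coe, Multiset.coe_toList]
        simp [D]
        rfl
      simp [hperm.mem_iff]
    have hres := hb D (by simp [F]) hDne D 0 (by simp) (by simp [D]) σ₃ hmgu
    rw [show Clause.subst σ₃ (0 : Clause ℕ Unit Unit) = 0 from rfl, add_zero] at hres
    exact nv3 hres
  · -- F satisfiable
    refine ⟨⟨Unit, ⟨()⟩, fun _ _ => (), fun _ _ => False⟩, ?_⟩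
    intro Cl hCl ρ
    simp only [F, Set.mem_singleton_iff] at hCl
    subst hCl
    exact ⟨pL false vu vv, by simp [D], by simp [litHolds, pL]⟩
  · -- F ∪ {C} unsat
    rintro ⟨I, hI⟩
    obtain ⟨d⟩ := I.nonempty
    set ρ : ℕ → I.dom := fun _ => d with hρ
    have hC := hI (L ::ₘ C') (by simp [F]) ρ
    have hD := hI D (by simp [F]) ρ
    obtain ⟨l, hl, hlh⟩ := hC
    have hp : I.pr () [d, d] := by
      simp only [L, C', Multiset.mem_cons, Multiset.mem_singleton] at hl
      rcases hl with rfl | rfl <;>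
        simpa [litHolds, pL, vx, vy, Term.eval_var, ρ] using hlh
    obtain ⟨l', hl', hlh'⟩ := hD
    simp only [D, Multiset.insert_eq_cons, Multiset.mem_cons, Multiset.mem_singleton] at hl'
    rcases hl' with rfl | rfl <;>
      · simp only [litHolds, pL, vu, vv, Term.eval_var, ρ] at hlh'
        exact absurd hp (by simpa using hlh'.2)
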